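/- With S, ρ_EPR, and ε(η) = η²·ρ_EPR + (1-η²)·(I₄/4) as in the optimal CHSH strategy, and for η ∈ [0,1], the CHSH success probability (1/8)·Tr(S·ε(η)) + 1/2 exceeds the local bound 3/4 if and only if η² > 1/√2. -/

import Mathlib

open Matrix Kronecker

noncomputable def sigmaX : Matrix (Fin 2) (Fin 2) ℂ := !![0, 1; 1, 0]
noncomputable def sigmaZ : Matrix (Fin 2) (Fin 2) ℂ := !![1, 0; 0, -1]

/-- The CHSH Bell operator for the optimal quantum strategy. -/
noncomputable def chshOp : Matrix ((Fin 2) × (Fin 2)) ((Fin 2) × (Fin 2)) ℂ :=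
  sigmaZ ⊗ₖ (((Real.sqrt 2 : ℂ))⁻¹ • (sigmaZ + sigmaX)) +
  sigmaZ ⊗ₖ (((Real.sqrt 2 : ℂ))⁻¹ • (sigmaZ - sigmaX)) +
  sigmaX ⊗ₖ (((Real.sqrt 2 : ℂ))⁻¹ • (sigmaZ + sigmaX)) -
  sigmaX ⊗ₖ (((Real.sqrt 2 : ℂ))⁻¹ • (sigmaZ - sigmaX))

noncomputable def eprVec : (Fin 2) × (Fin 2) → ℂ :=
  fun p => if p.1 = p.2 then ((Real.sqrt 2 : ℂ))⁻¹ else 0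

noncomputable def eprState : Matrix ((Fin 2) × (Fin 2)) ((Fin 2) × (Fin 2)) ℂ :=
  Matrix.vecMulVec eprVec (star eprVec)

noncomputable def depolarizedEPR (η : ℝ) :
    Matrix ((Fin 2) × (Fin 2)) ((Fin 2) × (Fin 2)) ℂ :=
  ((η ^ 2 : ℝ) : ℂ) • eprState +
    (((1 - η ^ 2 : ℝ)) : ℂ) •
      ((4 : ℂ)⁻¹ • (1 : Matrix ((Fin 2) × (Fin 2)) ((Fin 2) × (Fin 2)) ℂ))

theorem traceCalc (η : ℝ) : ((chshOp * depolarizedEPR η).trace) = ((η^2 * (2 * Real.sqrt 2) : ℝ) : ℂ) := by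
  have h2 : (Real.sqrt 2 : ℂ) * Real.sqrt 2 = 2 := by
    norm_cast
    exact Real.mul_self_sqrt (by norm_num)
  simp [Matrix.trace, Matrix.mul_apply, chshOp, depolarizedEPR, eprState, eprVec,
    sigmaX, sigmaZ, Matrix.vecMulVec_apply, Matrix.kroneckerMap_apply, Fin.sum_univ_succ,
    Fintype.sum_prod_type, Prod.mk.injEq, Matrix.one_apply, Matrix.smul_apply,
    Matrix.add_apply, Matrix.sub_apply]
  have hs : (Real.sqrt 2 : ℂ) ≠ 0 := by
    simp [Real.sqrt_eq_zero']
  field_simp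
  ring_nf
  have hp2 : ((Real.sqrt 2:ℂ))^2 = 2 := by rw [sq, h2]
  have hp4 : ((Real.sqrt 2:ℂ))^4 = 4 := by
    rw [show (4:ℕ) = 2*2 from rfl, pow_mul, hp2]; norm_num
  have hp6 : ((Real.sqrt 2:ℂ))^6 = 8 := by
    rw [show ((Real.sqrt 2:ℂ))^6 = (Real.sqrt 2:ℂ)^4 * (Real.sqrt 2:ℂ)^2 by ring, hp4, hp2]; norm_num
  have hpi : (((Real.sqrt 2:ℂ))⁻¹)^6 = 8⁻¹ := by rw [inv_pow, hp6]
  rw [hp4]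
  ring

/-- The CHSH success probability for the η-depolarized EPR pair exceeds the
local bound `3/4` if and only if `η² > 1/√2`. -/
theorem chsh_tolerance_iff (η : ℝ) (hη : η ∈ Set.Icc (0 : ℝ) 1) :
    (1 / 8 : ℝ) * ((chshOp * depolarizedEPR η).trace).re + 1 / 2 > 3 / 4 ↔
      η ^ 2 > (Real.sqrt 2)⁻¹ := by
  rw [traceCalc η, Complex.ofReal_re]
  have h2 : Real.sqrt 2 * Real.sqrt 2 = 2 := Real.mul_self_sqrt (by norm_num)
  have hpos : (0:ℝ) < Real.sqrt 2 := by positivity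
  have hi : (Real.sqrt 2)⁻¹ * Real.sqrt 2 = 1 := inv_mul_cancel₀ hpos.ne'
  constructor
  · intro h
    nlinarith [h, hi, hpos, h2]
  · intro h
    nlinarith [h, hi, hpos, h2, mul_pos hpos (sub_pos.mpr h)]
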